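/- On a probability space, let (Y_i)_{i ∈ ℕ} be independent and identically distributed Bernoulli random variables with success probability p₀ ∈ (0,1). For each N ∈ ℕ and each i ≤ N let b_{N,i} : Ω → {0,1} be random pending-status indicators satisfying (1/N)·Σ_{i≤N} (1 − b_{N,i}) → 0 almost surely, and let ρ_{N,i} ∈ [0,1] be constants. Let π₀ be a Borel probability measure on [0,1] with π₀({p : |p − p₀| < ε}) > 0 for every ε > 0, and define the random survival likelihood L_N(p) = ∏_{i≤N} [ p^{Y_i} (1−p)^{1−Y_i} ]^{b_{N,i}} · (1 − ρ_{N,i} p)^{1 − b_{N,i}}. Then almost surely, for every ε > 0, the posterior probability ( ∫_{{p : |p−p₀|<ε}} L_N dπ₀ ) / ( ∫_{[0,1]} L_N dπ₀ ) converges to 1 as N → ∞. -/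

import Mathlib

open MeasureTheory Filter Real Topology

lemma log_quad {x : ℝ} (hx : 0 < x) (hx1 : x ≤ 1) :
    Real.log x ≤ x - 1 - (x - 1)^2 / 2 := by
  rcases eq_or_lt_of_le hx1 with rfl | hlt
  · simp
  have key : ∀ t : ℝ, 0 < t →
      HasDerivAt (fun t : ℝ => t - 1 - (t-1)^2/2 - Real.log t)
        (1 - 2*(t-1)^1*1/2 - t⁻¹) t := by
    intro t ht0
    exact (((hasDerivAt_id t).sub_const 1).sub
      ((((hasDerivAt_id t).sub_const 1).pow 2).div_const 2)).sub
      (Real.hasDerivAt_log ht0.ne')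
  have h : AntitoneOn (fun t : ℝ => t - 1 - (t-1)^2/2 - Real.log t) (Set.Icc x 1) := by
    apply antitoneOn_of_deriv_nonpos (convex_Icc _ _)
    · apply ContinuousOn.sub
      · fun_prop
      · apply ContinuousOn.log continuousOn_id
        intro t ht; exact ne_of_gt (lt_of_lt_of_le hx ht.1)
    · intro t ht
      rw [interior_Icc] at ht
      exact (key t (lt_trans hx ht.1)).differentiableAt.differentiableWithinAt
    · intro t ht
      rw [interior_Icc] at ht
      have ht0 : 0 < t := lt_trans hx ht.1
      rw [(key t ht0).deriv]
      have h2 : 1 - 2*(t-1)^1*1/2 - t⁻¹ = -((t-1)^2/t) := by field_simp; ring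
      rw [h2]
      have : (0:ℝ) ≤ (t-1)^2/t := by positivity
      linarith
  have := h (Set.left_mem_Icc.2 hx1) (Set.right_mem_Icc.2 hx1) hx1
  simp only [Real.log_one] at this
  linarith

/-- quantitative lower bound on binary KL divergence. -/
lemma F_gap {p q : ℝ} (hq : q ∈ Set.Ioo (0:ℝ) 1) (hp : p ∈ Set.Ioo (0:ℝ) 1) :
    q * Real.log p + (1-q) * Real.log (1-p)
      ≤ q * Real.log q + (1-q) * Real.log (1-q) - (p-q)^2/2 := by
  obtain ⟨hq0, hq1⟩ := hq; obtain ⟨hp0, hp1⟩ := hp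
  have hqne : q ≠ 0 := hq0.ne'
  have hq1' : (0:ℝ) < 1 - q := by linarith
  have hq1ne : (1:ℝ) - q ≠ 0 := hq1'.ne'
  have hp1' : (0:ℝ) < 1 - p := by linarith
  rcases le_total p q with hle | hle
  · have h1 : Real.log (p/q) ≤ p/q - 1 - (p/q - 1)^2/2 :=
      log_quad (div_pos hp0 hq0) (by rw [div_le_one hq0]; exact hle)
    have h2 : Real.log ((1-p)/(1-q)) ≤ (1-p)/(1-q) - 1 :=
      Real.log_le_sub_one_of_pos (div_pos hp1' hq1')
    rw [Real.log_div hp0.ne' hqne] at h1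
    rw [Real.log_div hp1'.ne' hq1ne] at h2
    have A : q * Real.log p - q * Real.log q ≤ (p - q) - (p-q)^2/(2*q) := by
      calc q * Real.log p - q * Real.log q = q * (Real.log p - Real.log q) := by ring
        _ ≤ q * (p/q - 1 - (p/q-1)^2/2) := mul_le_mul_of_nonneg_left h1 hq0.le
        _ = (p-q) - (p-q)^2/(2*q) := by field_simp
    have B : (1-q) * Real.log (1-p) - (1-q) * Real.log (1-q) ≤ q - p := by
      calc (1-q) * Real.log (1-p) - (1-q) * Real.log (1-q)
          = (1-q) * (Real.log (1-p) - Real.log (1-q)) := by ring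
        _ ≤ (1-q) * ((1-p)/(1-q) - 1) := mul_le_mul_of_nonneg_left h2 hq1'.le
        _ = q - p := by field_simp; ring
    have C : (p-q)^2/2 ≤ (p-q)^2/(2*q) := by
      rw [div_le_div_iff₀ two_pos (by positivity)]
      nlinarith [sq_nonneg (p-q)]
    linarith
  · have h1 : Real.log ((1-p)/(1-q)) ≤ (1-p)/(1-q) - 1 - ((1-p)/(1-q) - 1)^2/2 :=
      log_quad (div_pos hp1' hq1') (by rw [div_le_one hq1']; linarith)
    have h2 : Real.log (p/q) ≤ p/q - 1 :=
      Real.log_le_sub_one_of_pos (div_pos hp0 hq0)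
    rw [Real.log_div hp1'.ne' hq1ne] at h1
    rw [Real.log_div hp0.ne' hqne] at h2
    have A : (1-q) * Real.log (1-p) - (1-q) * Real.log (1-q)
        ≤ (q - p) - (p-q)^2/(2*(1-q)) := by
      calc (1-q) * Real.log (1-p) - (1-q) * Real.log (1-q)
          = (1-q) * (Real.log (1-p) - Real.log (1-q)) := by ring
        _ ≤ (1-q) * ((1-p)/(1-q) - 1 - ((1-p)/(1-q)-1)^2/2) :=
            mul_le_mul_of_nonneg_left h1 hq1'.le
        _ = (q-p) - (p-q)^2/(2*(1-q)) := by field_simp; ring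
    have B : q * Real.log p - q * Real.log q ≤ p - q := by
      calc q * Real.log p - q * Real.log q = q * (Real.log p - Real.log q) := by ring
        _ ≤ q * (p/q - 1) := mul_le_mul_of_nonneg_left h2 hq0.le
        _ = p - q := by field_simp
    have C : (p-q)^2/2 ≤ (p-q)^2/(2*(1-q)) := by
      rw [div_le_div_iff₀ two_pos (by positivity)]
      nlinarith [sq_nonneg (p-q)]
    linarith

/-- upper bound on binary KL divergence. -/
lemma F_close {p q : ℝ} (hq : q ∈ Set.Ioo (0:ℝ) 1) (hp : p ∈ Set.Ioo (0:ℝ) 1) :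
    q * Real.log q + (1-q) * Real.log (1-q) - (p-q)^2/(p*(1-p))
      ≤ q * Real.log p + (1-q) * Real.log (1-p) := by
  obtain ⟨hq0, hq1⟩ := hq; obtain ⟨hp0, hp1⟩ := hp
  have hp1' : (0:ℝ) < 1 - p := by linarith
  have hq1' : (0:ℝ) < 1 - q := by linarith
  have hpne : p ≠ 0 := hp0.ne'
  have hp1ne : (1:ℝ) - p ≠ 0 := hp1'.ne'
  have h1 : Real.log q - Real.log p ≤ q/p - 1 := by
    rw [← Real.log_div hq0.ne' hpne]
    exact Real.log_le_sub_one_of_pos (div_pos hq0 hp0)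
  have h2 : Real.log (1-q) - Real.log (1-p) ≤ (1-q)/(1-p) - 1 := by
    rw [← Real.log_div hq1'.ne' hp1ne]
    exact Real.log_le_sub_one_of_pos (div_pos hq1' hp1')
  have A : q * Real.log q - q * Real.log p ≤ q*(q-p)/p := by
    calc q * Real.log q - q * Real.log p = q * (Real.log q - Real.log p) := by ring
      _ ≤ q * (q/p - 1) := mul_le_mul_of_nonneg_left h1 hq0.le
      _ = q*(q-p)/p := by field_simp
  have B : (1-q) * Real.log (1-q) - (1-q) * Real.log (1-p) ≤ (1-q)*(p-q)/(1-p) := by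
    calc (1-q) * Real.log (1-q) - (1-q) * Real.log (1-p)
        = (1-q) * (Real.log (1-q) - Real.log (1-p)) := by ring
      _ ≤ (1-q) * ((1-q)/(1-p) - 1) := mul_le_mul_of_nonneg_left h2 hq1'.le
      _ = (1-q)*(p-q)/(1-p) := by field_simp; ring
  have C : q*(q-p)/p + (1-q)*(p-q)/(1-p) = (p-q)^2/(p*(1-p)) := by
    field_simp; ring
  linarith


lemma prod_bern {N : ℕ} (c : Fin N → Bool) (z : Fin N → Bool) (p : ℝ) :
    (∏ i : Fin N, (if c i then (if z i then p else 1-p) else 1))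
      = p ^ (Finset.univ.filter (fun i => c i = true ∧ z i = true)).card
        * (1-p) ^ ((Finset.univ.filter (fun i => c i = true)).card
            - (Finset.univ.filter (fun i => c i = true ∧ z i = true)).card) := by
  classical
  rw [← Finset.prod_filter]
  rw [← Finset.prod_filter_mul_prod_filter_not
    (Finset.univ.filter (fun i => c i = true)) (fun i => z i = true)]
  rw [Finset.filter_filter, Finset.filter_filter]
  have e1 : ∏ i ∈ Finset.univ.filter (fun i => c i = true ∧ z i = true),
      (if z i then p else 1-p) = p ^ (Finset.univ.filter (fun i => c i = true ∧ z i = true)).card := by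
    rw [Finset.prod_congr rfl (fun i hi => ?_), Finset.prod_const]
    simp only [Finset.mem_filter] at hi
    simp [hi.2.2]
  have e2 : ∏ i ∈ Finset.univ.filter (fun i => c i = true ∧ ¬ z i = true),
      (if z i then p else 1-p) = (1-p) ^ (Finset.univ.filter (fun i => c i = true ∧ ¬ z i = true)).card := by
    rw [Finset.prod_congr rfl (fun i hi => ?_), Finset.prod_const]
    simp only [Finset.mem_filter] at hi
    simp [hi.2.2]
  rw [e1, e2]
  congr 1
  have := Finset.card_filter_add_card_filter_not
    (s := Finset.univ.filter (fun i : Fin N => c i = true)) (p := fun i => z i = true)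
  rw [Finset.filter_filter, Finset.filter_filter] at this
  simp only [Bool.not_eq_true] at this ⊢
  congr 1
  omega

lemma prod_split {N : ℕ} (c : Fin N → Bool) (f : Fin N → ℝ) (x : ℝ) :
    (∏ i : Fin N, (if c i then f i else x))
      = (∏ i : Fin N, (if c i then f i else 1))
        * x ^ (N - (Finset.univ.filter (fun i => c i = true)).card) := by
  classical
  rw [← Finset.prod_filter_mul_prod_filter_not Finset.univ (fun i => c i = true)]
  rw [← Finset.prod_filter_mul_prod_filter_not Finset.univ (fun i => c i = true)
    (fun i => if c i then f i else 1)]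
  have e0 : ∀ (g : Fin N → ℝ) (w : ℝ), ∏ i ∈ Finset.univ.filter (fun i => c i = true),
      (if c i then g i else w) = ∏ i ∈ Finset.univ.filter (fun i => c i = true), g i := by
    intro g w
    refine Finset.prod_congr rfl (fun i hi => ?_)
    simp only [Finset.mem_filter] at hi
    simp [hi.2]
  have e1 : ∀ (g : Fin N → ℝ) (w : ℝ), ∏ i ∈ Finset.univ.filter (fun i => ¬ c i = true),
      (if c i then g i else w)
        = w ^ (N - (Finset.univ.filter (fun i => c i = true)).card) := by
    intro g w
    rw [Finset.prod_congr rfl (fun i hi => ?_), Finset.prod_const]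
    · congr 1
      have := Finset.card_filter_add_card_filter_not
        (s := (Finset.univ : Finset (Fin N))) (p := fun i => c i = true)
      simp only [Finset.card_univ, Fintype.card_fin] at this
      omega
    · simp only [Finset.mem_filter] at hi
      simp [hi.2]
  rw [e0 f x, e0 f 1, e1 f x, e1 f 1, one_pow, mul_one]


lemma qmem_aux {p₀ ε r q : ℝ} (hp0 : 0 < p₀) (hp1 : p₀ < 1)
    (hεa : ε ≤ p₀/2) (hεb : ε ≤ (1-p₀)/2) (hr1 : r ≤ ε/2) (hqr : |q - p₀| < r) :
    q ∈ Set.Ioo (0:ℝ) 1 := by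
  have h := abs_lt.1 hqr
  constructor <;> linarith [h.1, h.2]

lemma gup_aux {p₀ ε r q p : ℝ} (hp0 : 0 < p₀) (hp1 : p₀ < 1) (hε : 0 < ε)
    (hεa : ε ≤ p₀/2) (hεb : ε ≤ (1-p₀)/2) (hr1 : r ≤ ε/2) (hqr : |q - p₀| < r)
    (hq : q ∈ Set.Ioo (0:ℝ) 1) (hp : p ∈ Set.Ioo (0:ℝ) 1) (hpA : ε ≤ |p - p₀|) :
    q * Real.log p + (1-q) * Real.log (1-p)
      ≤ (q * Real.log q + (1-q) * Real.log (1-q)) - ε^2/8 := by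
  have habs : ε/2 ≤ |p - q| := by
    have h3' : |p - p₀| ≤ |p - q| + |q - p₀| := abs_sub_le p q p₀
    linarith
  have hsq : ε^2/4 ≤ (p - q)^2 := by
    nlinarith [sq_abs (p - q), abs_nonneg (p - q)]
  have := F_gap hq hp
  linarith

lemma glow_aux {p₀ ε r q p : ℝ} (hp0 : 0 < p₀) (hp1 : p₀ < 1) (hε : 0 < ε)
    (hεa : ε ≤ p₀/2) (hεb : ε ≤ (1-p₀)/2) (hr0 : 0 < r) (hr1 : r ≤ ε/2)
    (hr2 : r ≤ (p₀*(1-p₀)/4)*ε/32) (hqr : |q - p₀| < r)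
    (hq : q ∈ Set.Ioo (0:ℝ) 1) (hp : |p - p₀| < r) :
    0 < p ∧ p < 1 ∧ (1-p₀)/2 ≤ 1 - p ∧
    (q * Real.log q + (1-q) * Real.log (1-q)) - ε^2/16
      ≤ q * Real.log p + (1-q) * Real.log (1-p) := by
  have hp' := abs_lt.1 hp
  have hpa : 0 < p := by linarith [hp'.1]
  have hpb : p < 1 := by linarith [hp'.2]
  have hc₁p : (1-p₀)/2 ≤ 1 - p := by linarith [hp'.2]
  have hplow : p₀/2 ≤ p := by linarith [hp'.1]
  refine ⟨hpa, hpb, hc₁p, ?_⟩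
  have hcl := F_close hq ⟨hpa, hpb⟩
  have h1' : (p - q)^2 ≤ 4*r^2 := by
    have ht : |p - q| ≤ |p - p₀| + |p₀ - q| := abs_sub_le p p₀ q
    have h2' : |p₀ - q| < r := by rw [abs_sub_comm]; exact hqr
    nlinarith [sq_abs (p - q), abs_nonneg (p - q)]
  have hτ₀ : 0 < p₀*(1-p₀)/4 := by nlinarith
  have hpl2 : p₀*(1-p₀)/4 ≤ p*(1-p) := by nlinarith [mul_le_mul hplow hc₁p (by linarith) hpa.le]
  have h2 : (p-q)^2/(p*(1-p)) ≤ ε^2/16 := by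
    have hrr : r*r ≤ ((p₀*(1-p₀)/4)*ε/32) * (ε/2) :=
      mul_le_mul hr2 hr1 hr0.le (by nlinarith)
    have h3 : 4*r^2 ≤ (p₀*(1-p₀)/4) * (ε^2/16) := by nlinarith [hrr]
    have h4 : (p-q)^2/(p*(1-p)) ≤ (p-q)^2/(p₀*(1-p₀)/4) :=
      div_le_div_of_nonneg_left (sq_nonneg _) hτ₀ hpl2
    have h5 : (p-q)^2/(p₀*(1-p₀)/4) ≤ ε^2/16 := by
      rw [div_le_iff₀ hτ₀]
      linarith [h1', h3]
    linarith
  linarith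

set_option maxHeartbeats 1000000 in
theorem det_lemma (p₀ : ℝ) (hp₀ : p₀ ∈ Set.Ioo (0:ℝ) 1)
    (y : ℕ → Bool) (β : (N : ℕ) → Fin N → Bool)
    (ρ : (N : ℕ) → Fin N → ℝ) (hρ : ∀ N i, ρ N i ∈ Set.Icc (0:ℝ) 1)
    (π₀ : Measure ℝ) [IsProbabilityMeasure π₀]
    (hsupp : π₀ (Set.Icc (0:ℝ) 1)ᶜ = 0)
    (hpos : ∀ ε > 0, 0 < π₀ {p : ℝ | |p - p₀| < ε})
    (L : ℕ → ℝ → ℝ)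
    (hL : ∀ N p, L N p = ∏ i : Fin N,
      (if β N i then (if y i then p else 1 - p) else (1 - ρ N i * p)))
    (h1 : Tendsto (fun n : ℕ => (∑ i ∈ Finset.range n, (if y i then (1:ℝ) else 0)) / n)
      atTop (𝓝 p₀))
    (h2 : Tendsto (fun N : ℕ => (∑ i : Fin N, (if β N i then (0:ℝ) else 1)) / N)
      atTop (𝓝 0)) :
    ∀ ε > 0, Tendsto (fun N =>
        (∫ p in {p : ℝ | |p - p₀| < ε}, L N p ∂π₀) /
          (∫ p in Set.Icc (0:ℝ) 1, L N p ∂π₀))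
      atTop (𝓝 1) := by
  obtain ⟨hp0, hp1⟩ := hp₀
  classical
  set m : ℕ → ℕ := fun N => (Finset.univ.filter (fun i : Fin N => β N i = true)).card
    with hm_def
  set sN : ℕ → ℕ := fun N =>
    (Finset.univ.filter (fun i : Fin N => β N i = true ∧ y i = true)).card with hs_def
  set g : ℕ → ℝ → ℝ := fun N p => p ^ sN N * (1-p) ^ (m N - sN N) with hg_def
  have hsm : ∀ N, sN N ≤ m N := by
    intro N
    apply Finset.card_le_card
    intro i hi
    simp only [Finset.mem_filter] at hi ⊢
    exact ⟨hi.1, hi.2.1⟩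
  have hmN : ∀ N, m N ≤ N := by
    intro N
    simpa using Finset.card_filter_le (Finset.univ : Finset (Fin N)) (fun i => β N i = true)
  have hgprod : ∀ N (p : ℝ),
      (∏ i : Fin N, (if β N i then (if y i then p else 1 - p) else 1)) = g N p := by
    intro N p
    rw [prod_bern (β N) (fun i => y i) p]
  -- pointwise bounds on [0,1]
  have hfacts : ∀ N, ∀ p ∈ Set.Icc (0:ℝ) 1,
      0 ≤ L N p ∧ L N p ≤ g N p ∧ (1-p) ^ (N - m N) * g N p ≤ L N p := by
    intro N p hp
    obtain ⟨hpl, hpr⟩ := hp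
    have h1p : (0:ℝ) ≤ 1 - p := by linarith
    have hbern_nn : ∀ i : Fin N, (0:ℝ) ≤ (if y i then p else 1 - p) := by
      intro i; split_ifs <;> linarith
    refine ⟨?_, ?_, ?_⟩
    · rw [hL]
      apply Finset.prod_nonneg
      intro i _
      obtain ⟨hρ0, hρ1⟩ := hρ N i
      split_ifs with hb hy
      · exact hpl
      · linarith
      · have : ρ N i * p ≤ 1 := mul_le_one₀ hρ1 hpl hpr
        linarith
    · rw [hL]
      refine le_trans (Finset.prod_le_prod ?_ ?_) (le_of_eq (hgprod N p))
      · intro i _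
        obtain ⟨hρ0, hρ1⟩ := hρ N i
        split_ifs with hb hy
        · exact hpl
        · linarith
        · have : ρ N i * p ≤ 1 := mul_le_one₀ hρ1 hpl hpr
          linarith
      · intro i _
        obtain ⟨hρ0, hρ1⟩ := hρ N i
        split_ifs with hb hy
        · exact le_rfl
        · exact le_rfl
        · have : 0 ≤ ρ N i * p := mul_nonneg hρ0 hpl
          linarith
    · rw [hL]
      have e : (1-p) ^ (N - m N) * g N p
          = ∏ i : Fin N, (if β N i then (if y i then p else 1 - p) else (1 - p)) := by
        rw [prod_split (β N) (fun i => if y i then p else 1 - p) (1-p)]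
        rw [mul_comm]
        congr 1
        exact (hgprod N p).symm
      rw [e]
      apply Finset.prod_le_prod
      · intro i _
        split_ifs with hb hy
        · exact hpl
        · exact h1p
        · exact h1p
      · intro i _
        obtain ⟨hρ0, hρ1⟩ := hρ N i
        split_ifs with hb hy
        · exact le_rfl
        · exact le_rfl
        · have : ρ N i * p ≤ p := mul_le_of_le_one_left hpl hρ1
          linarith
  have hcont : ∀ N, Continuous (L N) := by
    intro N
    have e : L N = fun p => ∏ i : Fin N,
        (if β N i then (if y i then p else 1 - p) else (1 - ρ N i * p)) := funext (hL N)
    rw [e]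
    apply continuous_finset_prod
    intro i _
    cases hb : β N i <;> cases hy : y (i : ℕ) <;> simp [hb, hy] <;> fun_prop
  have hIcc : ∀ N, IntegrableOn (L N) (Set.Icc 0 1) π₀ := fun N =>
    (hcont N).integrableOn_Icc
  have haemem : ∀ᵐ p ∂π₀, p ∈ Set.Icc (0:ℝ) 1 := by
    rw [ae_iff]
    convert hsupp using 2
    rfl
  have hae : ∀ N, ∀ᵐ p ∂π₀, 0 ≤ L N p := by
    intro N
    filter_upwards [haemem] with p hp using (hfacts N p hp).1
  have haeq : ∀ t : Set ℝ, t =ᵐ[π₀] ((t ∩ Set.Icc (0:ℝ) 1 : Set ℝ)) := by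
    intro t
    rw [MeasureTheory.ae_eq_set]
    constructor
    · apply measure_mono_null _ hsupp
      intro x hx
      simp only [Set.mem_diff, Set.mem_inter_iff, not_and, Set.mem_compl_iff] at hx ⊢
      exact fun h => (hx.2 hx.1) h
    · have he : (t ∩ Set.Icc (0:ℝ) 1) \ t = ∅ := by
        ext x
        simp only [Set.mem_diff, Set.mem_inter_iff, Set.mem_empty_iff_false, iff_false,
          not_and]
        tauto
      rw [he]
      exact measure_empty
  have hIntA : ∀ N (A : Set ℝ), IntegrableOn (L N) A π₀ := by
    intro N A
    have h' : IntegrableOn (L N) (A ∩ Set.Icc (0:ℝ) 1) π₀ :=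
      (hIcc N).mono_set Set.inter_subset_right
    unfold IntegrableOn at h' ⊢
    rwa [Measure.restrict_congr_set (haeq A)]
  -- limits
  have hsum : ∀ N, (∑ i : Fin N, (if β N i then (0:ℝ) else 1)) = (N:ℝ) - m N := by
    intro N
    have e : ∀ i : Fin N, (if β N i then (0:ℝ) else 1)
        = 1 - (if β N i = true then (1:ℝ) else 0) := by
      intro i; split_ifs <;> norm_num
    rw [Finset.sum_congr rfl (fun i _ => e i), Finset.sum_sub_distrib, Finset.sum_const,
      Finset.sum_boole]
    simp [hm_def]
  have hc2 : Tendsto (fun N : ℕ => ((N:ℝ) - m N) / N) atTop (𝓝 0) := by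
    apply h2.congr
    intro N
    rw [hsum N]
  have hm1 : Tendsto (fun N : ℕ => (m N : ℝ) / N) atTop (𝓝 1) := by
    have h : Tendsto (fun N : ℕ => 1 - ((N:ℝ) - m N)/N) atTop (𝓝 (1 - 0)) :=
      tendsto_const_nhds.sub hc2
    rw [sub_zero] at h
    apply h.congr'
    filter_upwards [eventually_ge_atTop 1] with N hN
    have hN0 : (N:ℝ) ≠ 0 := Nat.cast_ne_zero.2 (by omega)
    field_simp
    ring
  have hsR : ∀ N, (sN N:ℝ)
      = ∑ i : Fin N, (if β N i then (if y i then (1:ℝ) else 0) else 0) := by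
    intro N
    have e : ∀ i : Fin N, (if β N i then (if y i then (1:ℝ) else 0) else 0)
        = if (β N i = true ∧ y (i:ℕ) = true) then (1:ℝ) else 0 := by
      intro i
      cases hb : β N i <;> cases hy : y (i : ℕ) <;> simp [hb, hy]
    rw [Finset.sum_congr rfl (fun i _ => e i), Finset.sum_boole]
  have hsNlim : Tendsto (fun N : ℕ => (sN N : ℝ) / N) atTop (𝓝 p₀) := by
    have hub : ∀ N : ℕ, (sN N:ℝ)/N
        ≤ (∑ i ∈ Finset.range N, (if y i then (1:ℝ) else 0))/N := by
      intro N
      rcases Nat.eq_zero_or_pos N with rfl | hNp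
      · simp
      have hN0 : (0:ℝ) < N := by exact_mod_cast hNp
      gcongr
      rw [hsR, ← Fin.sum_univ_eq_sum_range (fun j => if y j then (1:ℝ) else 0) N]
      apply Finset.sum_le_sum
      intro i _
      cases hb : β N i <;> cases hy : y (i : ℕ) <;> simp [hb, hy]
    have hlb : ∀ N : ℕ, (∑ i ∈ Finset.range N, (if y i then (1:ℝ) else 0))/N
        - ((N:ℝ) - m N)/N ≤ (sN N:ℝ)/N := by
      intro N
      rcases Nat.eq_zero_or_pos N with rfl | hNp
      · simp
      have hN0 : (0:ℝ) < N := by exact_mod_cast hNp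
      rw [div_sub_div_same]
      gcongr
      rw [hsR, ← hsum N, ← Fin.sum_univ_eq_sum_range (fun j => if y j then (1:ℝ) else 0) N,
        ← Finset.sum_sub_distrib]
      apply Finset.sum_le_sum
      intro i _
      cases hb : β N i <;> cases hy : y (i : ℕ) <;> simp [hb, hy]
    have hlow := h1.sub hc2
    rw [sub_zero] at hlow
    exact tendsto_of_tendsto_of_tendsto_of_le_of_le hlow h1 hlb hub
  have hqlim : Tendsto (fun N : ℕ => (sN N : ℝ)/(m N:ℝ)) atTop (𝓝 p₀) := by
    have h := hsNlim.div hm1 one_ne_zero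
    rw [div_one] at h
    apply h.congr'
    filter_upwards [eventually_ge_atTop 1] with N hN
    have hN0 : (N:ℝ) ≠ 0 := Nat.cast_ne_zero.2 (by omega)
    rcases Nat.eq_zero_or_pos (m N) with hm0 | hmp
    · have hs0 : sN N = 0 := by have := hsm N; omega
      simp [hm0, hs0]
    · have hm0 : (m N:ℝ) ≠ 0 := Nat.cast_ne_zero.2 (by omega)
      simp only [Pi.div_apply]
      field_simp
  -- key statement for small ε
  have key : ∀ ε : ℝ, 0 < ε → ε ≤ min p₀ (1-p₀) / 2 →
      Tendsto (fun N =>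
        (∫ p in {p : ℝ | |p - p₀| < ε}, L N p ∂π₀) /
          (∫ p in Set.Icc (0:ℝ) 1, L N p ∂π₀)) atTop (𝓝 1)
      ∧ ∀ᶠ N in atTop, 0 < ∫ p in Set.Icc (0:ℝ) 1, L N p ∂π₀ := by
    intro ε hε hεs
    have hεa : ε ≤ p₀/2 := le_trans hεs (by
      have := min_le_left p₀ (1-p₀); linarith)
    have hεb : ε ≤ (1-p₀)/2 := le_trans hεs (by
      have := min_le_right p₀ (1-p₀); linarith)
    have h1p : (0:ℝ) < 1 - p₀ := by linarith
    obtain ⟨r, hr0, hr1, hr2⟩ : ∃ r : ℝ, 0 < r ∧ r ≤ ε/2 ∧ r ≤ p₀*(1-p₀)/4*ε/32 := by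
      refine ⟨min (ε/2) (p₀*(1-p₀)/4*ε/32), ?_, min_le_left _ _, min_le_right _ _⟩
      apply lt_min (by linarith)
      have : 0 < p₀*(1-p₀)/4 := by nlinarith
      positivity
    set c₁ : ℝ := (1-p₀)/2 with hc₁def
    have hc₁ : 0 < c₁ := by rw [hc₁def]; linarith
    set A : Set ℝ := {p : ℝ | |p - p₀| < ε} with hAdef
    set A' : Set ℝ := {p : ℝ | |p - p₀| < r} with hA'def
    set K : Set ℝ := Set.Icc (0:ℝ) 1 \ A with hKdef
    have hAmeas : MeasurableSet A := by
      have : A = Metric.ball p₀ ε := by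
        ext p; simp [hAdef, Metric.mem_ball, Real.dist_eq]
      rw [this]; exact measurableSet_ball
    have hA'meas : MeasurableSet A' := by
      have : A' = Metric.ball p₀ r := by
        ext p; simp [hA'def, Metric.mem_ball, Real.dist_eq]
      rw [this]; exact measurableSet_ball
    have hKmeas : MeasurableSet K := measurableSet_Icc.diff hAmeas
    set α : ℝ := (π₀ A').toReal with hαdef
    have hα : 0 < α := ENNReal.toReal_pos (hpos r hr0).ne' (measure_ne_top _ _)
    -- subset facts
    have hA'sub : A' ⊆ Set.Icc (0:ℝ) 1 := by
      intro p hp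
      simp only [hA'def, Set.mem_setOf_eq] at hp
      rw [abs_lt] at hp
      constructor <;> nlinarith
    have hA'A : A' ⊆ A ∩ Set.Icc (0:ℝ) 1 := by
      intro p hp
      refine ⟨?_, hA'sub hp⟩
      simp only [hA'def, Set.mem_setOf_eq] at hp
      simp only [hAdef, Set.mem_setOf_eq]
      linarith
    -- eventual event
    have hEv : ∀ᶠ N in atTop,
        |((sN N:ℝ)/(m N:ℝ)) - p₀| < r ∧ 1 ≤ m N ∧ 1 ≤ N := by
      have e1 : ∀ᶠ N in atTop, |((sN N:ℝ)/(m N:ℝ)) - p₀| < r := by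
        have h := hqlim (Metric.ball_mem_nhds p₀ hr0)
        filter_upwards [h] with N hN
        simpa [Metric.mem_ball, Real.dist_eq] using hN
      have e2 : ∀ᶠ N in atTop, 1 ≤ m N := by
        have h := hm1 (Ioi_mem_nhds (by norm_num : (1:ℝ)/2 < 1))
        filter_upwards [h] with N hN
        simp only [Set.mem_preimage, Set.mem_Ioi] at hN
        by_contra hc
        have : m N = 0 := by omega
        rw [this] at hN
        norm_num at hN
      filter_upwards [e1, e2, eventually_ge_atTop 1] with N a b c
      exact ⟨a, b, c⟩
    -- the limiting bound
    set W : ℕ → ℝ := fun N =>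
      -((((N:ℝ) - m N)/N) * Real.log c₁ + ((m N:ℝ)/N) * (ε^2/16)) with hWdef
    have hW : Tendsto W atTop (𝓝 (-(0 * Real.log c₁ + 1 * (ε^2/16)))) :=
      ((hc2.mul_const (Real.log c₁)).add (hm1.mul_const (ε^2/16))).neg
    have hWlim : Tendsto W atTop (𝓝 (-(ε^2/16))) := by
      convert hW using 2; ring
    have hNW : Tendsto (fun N : ℕ => (N:ℝ) * W N) atTop atBot := by
      apply Tendsto.atTop_mul_neg _ tendsto_natCast_atTop_atTop hWlim
      have : 0 < ε^2/16 := by positivity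
      linarith
    have hB0 : Tendsto (fun N : ℕ => α⁻¹ * Real.exp ((N:ℝ) * W N)) atTop (𝓝 0) := by
      have h := (Real.tendsto_exp_atBot.comp hNW).const_mul α⁻¹
      simpa using h
    -- main per-N estimate
    have main : ∀ᶠ N : ℕ in atTop,
        (1 - α⁻¹ * Real.exp ((N:ℝ) * W N)
          ≤ (∫ p in A, L N p ∂π₀) / (∫ p in Set.Icc (0:ℝ) 1, L N p ∂π₀))
        ∧ (∫ p in A, L N p ∂π₀) / (∫ p in Set.Icc (0:ℝ) 1, L N p ∂π₀) ≤ 1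
        ∧ 0 < ∫ p in Set.Icc (0:ℝ) 1, L N p ∂π₀ := by
      filter_upwards [hEv] with N hN
      obtain ⟨hqr, hm1N, hN1⟩ := hN
      set q : ℝ := (sN N:ℝ)/(m N:ℝ) with hqdef
      have hmR : (0:ℝ) < m N := by exact_mod_cast hm1N
      have hqr' := abs_lt.1 hqr
      have hqIoo : q ∈ Set.Ioo (0:ℝ) 1 := qmem_aux hp0 hp1 hεa hεb hr1 hqr
      have hs1 : 1 ≤ sN N := by
        by_contra hc
        have hs0 : sN N = 0 := by omega
        have : q = 0 := by rw [hqdef, hs0]; simp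
        rw [this] at hqIoo
        exact lt_irrefl _ hqIoo.1
      have hslt : sN N < m N := by
        by_contra hc
        have : sN N = m N := by have := hsm N; omega
        have hq1 : q = 1 := by rw [hqdef, this, div_self hmR.ne']
        rw [hq1] at hqIoo
        exact lt_irrefl _ hqIoo.2
      have hcast1 : (sN N : ℝ) = q * m N := by
        rw [hqdef, div_mul_cancel₀ _ hmR.ne']
      have hcast2 : ((m N - sN N : ℕ) : ℝ) = (1-q) * m N := by
        rw [Nat.cast_sub (hsm N), hcast1]; ring
      set Fq : ℝ := q * Real.log q + (1-q) * Real.log (1-q) with hFqdef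
      -- exp representation of g on (0,1)
      have hgexp : ∀ p : ℝ, 0 < p → p < 1 →
          g N p = Real.exp ((m N:ℝ) * (q * Real.log p + (1-q) * Real.log (1-p))) := by
        intro p hpa hpb
        have hgpos : 0 < g N p := by
          rw [hg_def]
          exact mul_pos (pow_pos hpa _) (pow_pos (by linarith) _)
        rw [← Real.exp_log hgpos]
        congr 1
        rw [hg_def]
        simp only
        rw [Real.log_mul (pow_ne_zero _ hpa.ne') (pow_ne_zero _ (by linarith : (0:ℝ) < 1 - p).ne'),
          Real.log_pow, Real.log_pow, hcast1, hcast2]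
        ring
      -- upper bound on K
      have gup' : ∀ p ∈ K, g N p ≤ Real.exp ((m N:ℝ) * (Fq - ε^2/8)) := by
        intro p hp
        obtain ⟨⟨hpl, hpr⟩, hpA⟩ := hp
        have hpA' : ε ≤ |p - p₀| := not_lt.1 hpA
        rcases eq_or_lt_of_le hpl with rfl | hp0lt
        · rw [hg_def]
          simp only
          rw [zero_pow (by omega : sN N ≠ 0), zero_mul]
          exact (Real.exp_pos _).le
        rcases eq_or_lt_of_le hpr with hp1eq | hp1lt
        · subst hp1eq
          rw [hg_def]
          simp only
          rw [show (1:ℝ) - 1 = 0 by ring, zero_pow (by omega : m N - sN N ≠ 0), mul_zero]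
          exact (Real.exp_pos _).le
        rw [hgexp p hp0lt hp1lt]
        apply Real.exp_le_exp.2
        apply mul_le_mul_of_nonneg_left _ hmR.le
        have := gup_aux hp0 hp1 hε hεa hεb hr1 hqr hqIoo ⟨hp0lt, hp1lt⟩ hpA'
        rw [hFqdef]
        linarith
      -- lower bound on A'
      have glow : ∀ p ∈ A',
          c₁ ^ (N - m N) * Real.exp ((m N:ℝ) * (Fq - ε^2/16)) ≤ L N p := by
        intro p hp
        simp only [hA'def, Set.mem_setOf_eq] at hp
        obtain ⟨hpa, hpb, hc₁p', hFb'⟩ := glow_aux hp0 hp1 hε hεa hεb hr0 hr1 hr2 hqr hqIoo hp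
        have hc₁p : c₁ ≤ 1 - p := by rw [hc₁def]; exact hc₁p'
        have hpIcc : p ∈ Set.Icc (0:ℝ) 1 := ⟨hpa.le, hpb.le⟩
        obtain ⟨hL0, hLle, hLge⟩ := hfacts N p hpIcc
        have hFb : Fq - ε^2/16 ≤ q * Real.log p + (1-q) * Real.log (1-p) := by
          rw [hFqdef]
          linarith [hFb']
        have hgl : Real.exp ((m N:ℝ) * (Fq - ε^2/16)) ≤ g N p := by
          rw [hgexp p hpa hpb]
          exact Real.exp_le_exp.2 (mul_le_mul_of_nonneg_left hFb hmR.le)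
        have hpow : c₁ ^ (N - m N) ≤ (1-p) ^ (N - m N) :=
          pow_le_pow_left₀ hc₁.le hc₁p _
        calc c₁ ^ (N - m N) * Real.exp ((m N:ℝ) * (Fq - ε^2/16))
            ≤ (1-p) ^ (N - m N) * g N p :=
              mul_le_mul hpow hgl (Real.exp_pos _).le (pow_nonneg (by linarith) _)
          _ ≤ L N p := hLge
      have gup : ∀ p ∈ K, L N p ≤ Real.exp ((m N:ℝ) * (Fq - ε^2/8)) :=
        fun p hp => le_trans (hfacts N p hp.1).2.1 (gup' p hp)
      -- integral estimates
      have hNu : (∫ p in A, L N p ∂π₀) = ∫ p in A ∩ Set.Icc (0:ℝ) 1, L N p ∂π₀ :=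
        setIntegral_congr_set (haeq A)
      have hsplit : (∫ p in Set.Icc (0:ℝ) 1, L N p ∂π₀)
          = (∫ p in A ∩ Set.Icc (0:ℝ) 1, L N p ∂π₀) + ∫ p in K, L N p ∂π₀ := by
        rw [← setIntegral_union (Set.disjoint_left.2 (fun x hx h2x => h2x.2 hx.1)) hKmeas
          ((hIcc N).mono_set Set.inter_subset_right) ((hIcc N).mono_set Set.diff_subset)]
        apply setIntegral_congr_set
        rw [Set.inter_comm, hKdef, Set.inter_union_diff]
        exact Filter.EventuallyEq.rfl
      have hVle : (∫ p in K, L N p ∂π₀) ≤ Real.exp ((m N:ℝ) * (Fq - ε^2/8)) := by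
        have hle := setIntegral_mono_on ((hIcc N).mono_set Set.diff_subset)
          (integrableOn_const (measure_ne_top _ _)) hKmeas gup
        rw [setIntegral_const, smul_eq_mul, measureReal_def] at hle
        have hK1 : (π₀ K).toReal ≤ 1 := by
          apply ENNReal.toReal_le_of_le_ofReal one_pos.le
          simpa using prob_le_one
        nlinarith [Real.exp_pos ((m N:ℝ) * (Fq - ε^2/8)), ENNReal.toReal_nonneg (a := π₀ K),
          hle]
      have hU'ge : α * (c₁ ^ (N - m N) * Real.exp ((m N:ℝ) * (Fq - ε^2/16)))
          ≤ ∫ p in A', L N p ∂π₀ := by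
        have hle := setIntegral_mono_on
          (integrableOn_const (measure_ne_top _ _))
          ((hIcc N).mono_set hA'sub) hA'meas glow
        rw [setIntegral_const, smul_eq_mul] at hle
        exact hle
      have hU'U : (∫ p in A', L N p ∂π₀) ≤ ∫ p in A ∩ Set.Icc (0:ℝ) 1, L N p ∂π₀ :=
        setIntegral_mono_set (hIntA N _) (ae_restrict_of_ae (hae N))
          (HasSubset.Subset.eventuallyLE hA'A)
      have hCl : 0 < α * (c₁ ^ (N - m N) * Real.exp ((m N:ℝ) * (Fq - ε^2/16))) :=
        mul_pos hα (mul_pos (pow_pos hc₁ _) (Real.exp_pos _))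
      have hUpos : 0 < ∫ p in A ∩ Set.Icc (0:ℝ) 1, L N p ∂π₀ :=
        lt_of_lt_of_le hCl (le_trans hU'ge hU'U)
      have hVnn : 0 ≤ ∫ p in K, L N p ∂π₀ :=
        setIntegral_nonneg hKmeas (fun p hp => (hfacts N p hp.1).1)
      have hDpos : 0 < ∫ p in Set.Icc (0:ℝ) 1, L N p ∂π₀ := by
        rw [hsplit]; linarith
      refine ⟨?_, ?_, hDpos⟩
      · -- lower bound for the ratio
        have hVD : (∫ p in K, L N p ∂π₀) / (∫ p in Set.Icc (0:ℝ) 1, L N p ∂π₀)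
            ≤ α⁻¹ * Real.exp ((N:ℝ) * W N) := by
          have hDB : α * (c₁ ^ (N - m N) * Real.exp ((m N:ℝ) * (Fq - ε^2/16)))
              ≤ ∫ p in Set.Icc (0:ℝ) 1, L N p ∂π₀ := by
            rw [hsplit]
            have := le_trans hU'ge hU'U
            linarith
          have h1' : (∫ p in K, L N p ∂π₀) / (∫ p in Set.Icc (0:ℝ) 1, L N p ∂π₀)
              ≤ Real.exp ((m N:ℝ) * (Fq - ε^2/8))
                / (α * (c₁ ^ (N - m N) * Real.exp ((m N:ℝ) * (Fq - ε^2/16)))) :=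
            div_le_div₀ (Real.exp_pos _).le hVle hCl hDB
          have h2' : Real.exp ((m N:ℝ) * (Fq - ε^2/8))
                / (α * (c₁ ^ (N - m N) * Real.exp ((m N:ℝ) * (Fq - ε^2/16))))
              = α⁻¹ * Real.exp ((N:ℝ) * W N) := by
            have hc₁e : c₁ ^ (N - m N)
                = Real.exp (((N - m N : ℕ):ℝ) * Real.log c₁) := by
              rw [← Real.log_pow, Real.exp_log (pow_pos hc₁ _)]
            rw [hc₁e, ← Real.exp_add, div_eq_mul_inv, mul_inv, ← Real.exp_neg, ← mul_assoc,
              mul_comm (Real.exp _) α⁻¹, mul_assoc, ← Real.exp_add]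
            congr 2
            rw [hWdef]
            simp only
            rw [Nat.cast_sub (hmN N)]
            have hN0 : (N:ℝ) ≠ 0 := Nat.cast_ne_zero.2 (by omega)
            field_simp
            ring
          rw [← h2']
          exact h1'
        have hre : (∫ p in A, L N p ∂π₀) / (∫ p in Set.Icc (0:ℝ) 1, L N p ∂π₀)
            = 1 - (∫ p in K, L N p ∂π₀) / (∫ p in Set.Icc (0:ℝ) 1, L N p ∂π₀) := by
          rw [hNu, eq_sub_iff_add_eq, ← add_div, hsplit]
          exact div_self (by rw [← hsplit]; exact hDpos.ne')
        rw [hre]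
        linarith
      · -- ratio at most one
        rw [hNu, div_le_one hDpos, hsplit]
        linarith
    constructor
    · have hBlim : Tendsto (fun N : ℕ => 1 - α⁻¹ * Real.exp ((N:ℝ) * W N)) atTop (𝓝 1) := by
        have h : Tendsto (fun N : ℕ => (1:ℝ) - α⁻¹ * Real.exp ((N:ℝ) * W N)) atTop
            (𝓝 (1 - 0)) := tendsto_const_nhds.sub hB0
        rw [sub_zero] at h
        exact h
      exact tendsto_of_tendsto_of_tendsto_of_le_of_le' hBlim tendsto_const_nhds
        (main.mono fun N h => h.1) (main.mono fun N h => h.2.1)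
    · exact main.mono fun N h => h.2.2
  -- wrapper for arbitrary ε
  intro ε hε
  have hc₀ : 0 < min p₀ (1-p₀) / 2 := by
    have := lt_min hp0 (by linarith : (0:ℝ) < 1 - p₀)
    linarith
  obtain ⟨T₁, hD⟩ := key (min ε (min p₀ (1-p₀) / 2)) (lt_min hε hc₀) (min_le_right _ _)
  have hsub : {p : ℝ | |p - p₀| < min ε (min p₀ (1-p₀) / 2)} ⊆ {p : ℝ | |p - p₀| < ε} := by
    intro p hp
    simp only [Set.mem_setOf_eq] at hp ⊢
    exact lt_of_lt_of_le hp (min_le_left _ _)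
  have hmono : ∀ N (A B : Set ℝ), A ⊆ B →
      (∫ p in A, L N p ∂π₀) ≤ ∫ p in B, L N p ∂π₀ := by
    intro N A B hAB
    exact setIntegral_mono_set (hIntA N B) (ae_restrict_of_ae (hae N))
      (HasSubset.Subset.eventuallyLE hAB)
  have hNuD : ∀ N, (∫ p in {p : ℝ | |p - p₀| < ε}, L N p ∂π₀)
      ≤ ∫ p in Set.Icc (0:ℝ) 1, L N p ∂π₀ := by
    intro N
    rw [setIntegral_congr_set (haeq {p : ℝ | |p - p₀| < ε})]
    exact hmono N _ _ Set.inter_subset_right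
  apply tendsto_of_tendsto_of_tendsto_of_le_of_le' T₁ tendsto_const_nhds
  · filter_upwards [hD] with N hDN
    have h := hmono N _ _ hsub
    gcongr
  · filter_upwards [hD] with N hDN
    exact (div_le_one hDN).2 (hNuD N)


/-- Stochastic version of Lemma 5.1(1): almost-sure posterior consistency of the
toxicity probability under the random survival likelihood, for i.i.d.
Bernoulli(p₀) outcomes with a vanishing fraction of pending outcomes. -/
theorem stmt_8 {Ω : Type*} [MeasurableSpace Ω] (P : Measure Ω) [IsProbabilityMeasure P]
    (p₀ : ℝ) (hp₀ : p₀ ∈ Set.Ioo (0:ℝ) 1)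
    (Y : ℕ → Ω → Bool)
    (hY_meas : ∀ i, Measurable (Y i))
    (hY_indep : ProbabilityTheory.iIndepFun Y P)
    (hY_dist : ∀ i, P {ω | Y i ω = true} = ENNReal.ofReal p₀)
    (b : (N : ℕ) → Fin N → Ω → Bool)
    (hb_meas : ∀ N i, Measurable (b N i))
    (hb_pending : ∀ᵐ ω ∂P,
      Tendsto (fun N => (∑ i : Fin N, (if b N i ω then (0:ℝ) else 1)) / N)
        atTop (nhds 0))
    (ρ : (N : ℕ) → Fin N → ℝ) (hρ : ∀ N i, ρ N i ∈ Set.Icc (0:ℝ) 1)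
    (π₀ : Measure ℝ) [IsProbabilityMeasure π₀]
    (hπ₀_supp : π₀ (Set.Icc (0:ℝ) 1)ᶜ = 0)
    (hπ₀_pos : ∀ ε > 0, 0 < π₀ {p : ℝ | |p - p₀| < ε})
    (L : ℕ → ℝ → Ω → ℝ)
    (hL : ∀ N p ω, L N p ω =
      ∏ i : Fin N,
        (if b N i ω then (if Y i ω then p else 1 - p) else (1 - ρ N i * p))) :
    ∀ᵐ ω ∂P, ∀ ε > 0,
      Tendsto (fun N =>
          (∫ p in {p : ℝ | |p - p₀| < ε}, L N p ω ∂π₀) /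
            (∫ p in Set.Icc (0:ℝ) 1, L N p ω ∂π₀))
        atTop (nhds 1) := by
  classical
  set X : ℕ → Ω → ℝ := fun i ω => if Y i ω then 1 else 0 with hXdef
  have mf : Measurable (fun v : Bool => if v then (1:ℝ) else 0) := Measurable.of_discrete
  have hXmeas : ∀ i, Measurable (X i) := fun i => mf.comp (hY_meas i)
  have hT : ∀ k, MeasurableSet {ω | Y k ω = true} := fun k =>
    (hY_meas k) (measurableSet_singleton true)
  have hXind : ∀ k, X k = Set.indicator {ω | Y k ω = true} (fun _ => (1:ℝ)) := by
    intro k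
    funext ω
    by_cases h : Y k ω = true <;> simp [hXdef, h, Set.indicator]
  have hint : Integrable (X 0) P := by
    rw [hXind 0]
    exact (integrable_const (1:ℝ)).indicator (hT 0)
  have hindep : Pairwise (Function.onFun (ProbabilityTheory.IndepFun · · P) X) := by
    intro i j hij
    exact (hY_indep.indepFun hij).comp mf mf
  have hple : ENNReal.ofReal p₀ ≤ 1 := by
    rw [← ENNReal.ofReal_one]
    exact ENNReal.ofReal_le_ofReal hp₀.2.le
  have hpre : ∀ (k : ℕ) (s : Set ℝ), P (X k ⁻¹' s)
      = (if (1:ℝ) ∈ s then ENNReal.ofReal p₀ else 0)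
        + (if (0:ℝ) ∈ s then 1 - ENNReal.ofReal p₀ else 0) := by
    intro k s
    by_cases h1 : (1:ℝ) ∈ s <;> by_cases h0 : (0:ℝ) ∈ s
    · have e : X k ⁻¹' s = Set.univ := by
        ext ω; by_cases h : Y k ω = true <;> simp [hXdef, h, h1, h0]
      rw [e]
      simp only [h1, h0, if_true, measure_univ]
      exact (add_tsub_cancel_of_le hple).symm
    · have e : X k ⁻¹' s = {ω | Y k ω = true} := by
        ext ω; by_cases h : Y k ω = true <;> simp [hXdef, h, h1, h0]
      rw [e, hY_dist k]
      simp [h1, h0]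
    · have e : X k ⁻¹' s = {ω | Y k ω = true}ᶜ := by
        ext ω; by_cases h : Y k ω = true <;> simp [hXdef, h, h1, h0]
      rw [e, prob_compl_eq_one_sub (hT k), hY_dist k]
      simp [h1, h0]
    · have e : X k ⁻¹' s = ∅ := by
        ext ω; by_cases h : Y k ω = true <;> simp [hXdef, h, h1, h0]
      rw [e]
      simp [h1, h0]
  have hident : ∀ i, ProbabilityTheory.IdentDistrib (X i) (X 0) P P := by
    intro i
    refine ⟨(hXmeas i).aemeasurable, (hXmeas 0).aemeasurable, ?_⟩
    apply Measure.ext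
    intro s hs
    rw [Measure.map_apply (hXmeas i) hs, Measure.map_apply (hXmeas 0) hs, hpre i s, hpre 0 s]
  have hexp : (∫ ω, X 0 ω ∂P) = p₀ := by
    rw [hXind 0, integral_indicator_const (1:ℝ) (hT 0), measureReal_def, hY_dist 0, smul_eq_mul, mul_one,
      ENNReal.toReal_ofReal hp₀.1.le]
  have hslln := ProbabilityTheory.strong_law_ae_real X hint hindep hident
  rw [hexp] at hslln
  filter_upwards [hslln, hb_pending] with ω hω1 hω2
  exact det_lemma p₀ hp₀ (fun i => Y i ω) (fun N i => b N i ω) ρ hρ π₀ hπ₀_supp hπ₀_pos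
    (fun N p => L N p ω) (fun N p => hL N p ω) hω1 hω2
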